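/- In the situation below (M free of rank d over K⟨φ⟩ with ρ-action matrix D, and J a Janet basis for ⟨p_1,…,p_d⟩), the image pr(W_gen) generates M as K⟨ρ⟩-module; that is, the family (S^l(pr(w)))_{w ∈ W_gen, l ≥ 0} spans M as a K-vector space. -/

import Mathlib

/-!
Common setup: the skew polynomial ring `D = K{φ,ρ}` (with commuting endomorphisms
`γφ, γρ : K → K`, `φ·x = γφ(x)·φ`, `ρ·x = γρ(x)·ρ`), the free left `D`-module
`𝓕 = ⊕_{i=1}^d D κ_i`, its monomials `φ^k ρ^j κ_i`, the monomial order, cones,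
Janet bases, and the data attached to a `D`-module `M` that is free over `K⟨φ⟩`.

`𝓕` is realized concretely as finitely supported coefficient functions on the
set of monomial indices `(i, k, j) ↔ φ^k ρ^j κ_i`; multiplication by `φ` resp. `ρ`
is the K-semilinear shift operator `PhiMul` resp. `RhoMul`.
-/

namespace JanetSetup

/-- Index of a monomial `φ^k ρ^j κ_i` of `𝓕`: the triple `(i, k, j)`. -/
abbrev MonIx (d : ℕ) := Fin d × ℕ × ℕ

/-- The free module `𝓕 = ⊕_{i=1}^d D κ_i`, as coefficient functions on monomials. -/
abbrev Fr (K : Type) [Field K] (d : ℕ) : Type := MonIx d →₀ K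

variable {K : Type} [Field K] {d : ℕ}

/-- Left multiplication by the variable `φ` on `𝓕`. -/
noncomputable def PhiMul (γφ : K →+* K) (f : Fr K d) : Fr K d :=
  Finsupp.mapDomain (fun m => (m.1, m.2.1 + 1, m.2.2))
    (Finsupp.mapRange (fun x => γφ x) (map_zero γφ) f)

/-- Left multiplication by the variable `ρ` on `𝓕`. -/
noncomputable def RhoMul (γρ : K →+* K) (f : Fr K d) : Fr K d :=
  Finsupp.mapDomain (fun m => (m.1, m.2.1, m.2.2 + 1))
    (Finsupp.mapRange (fun x => γρ x) (map_zero γρ) f)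

/-- The left `D`-submodule of `𝓕` generated by a set `s` (as a `K`-subspace:
the `K`-span of all `φ^k ρ^j g`, `g ∈ s`). -/
noncomputable def DSpan (γφ γρ : K →+* K) (s : Set (Fr K d)) : Submodule K (Fr K d) :=
  Submodule.span K
    {x | ∃ (k j : ℕ) (g : Fr K d), g ∈ s ∧ x = (PhiMul γφ)^[k] ((RhoMul γρ)^[j] g)}

/-- The monomial order: lexicographic with `ρ ≺ φ`, position-over-term with
`κ_{i₁} ≻ κ_{i₂}` for `i₁ < i₂`. -/
def MLt (a b : MonIx d) : Prop :=
  b.1 < a.1 ∨ (a.1 = b.1 ∧ (a.2.1 < b.2.1 ∨ (a.2.1 = b.2.1 ∧ a.2.2 < b.2.2)))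

/-- `m` is the leading monomial of `f`. -/
def IsLm (f : Fr K d) (m : MonIx d) : Prop :=
  m ∈ f.support ∧ ∀ m' ∈ f.support, m' ≠ m → MLt m' m

/-- The `μ`-cone of a monomial `m`; `μ = (φ ∈ μ, ρ ∈ μ)` as a pair of Booleans. -/
def Cone (μ : Bool × Bool) (m : MonIx d) : Set (MonIx d) :=
  {x | ∃ a b : ℕ, (μ.1 = true ∨ a = 0) ∧ (μ.2 = true ∨ b = 0) ∧
      x = (m.1, m.2.1 + a, m.2.2 + b)}

/-- A Janet basis `{(b_1,μ_1),…,(b_r,μ_r)}` for the submodule `N ⊆ 𝓕`: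
the `b_i` generate `N` as a left `D`-module and the set of leading monomials of
nonzero elements of `N` is the disjoint union of the cones `Mon(μ_i)·lm(b_i)`. -/
structure JanetBasis (γφ γρ : K →+* K) (d : ℕ) (N : Submodule K (Fr K d)) where
  r : ℕ
  b : Fin r → Fr K d
  μ : Fin r → Bool × Bool
  /-- the leading monomial of `b i` -/
  lmb : Fin r → MonIx d
  b_ne : ∀ i, b i ≠ 0
  b_lm : ∀ i, IsLm (b i) (lmb i)
  pair_inj : Function.Injective fun i => (b i, μ i)
  span_eq : DSpan γφ γρ (Set.range b) = N
  lm_cover : ∀ f ∈ N, f ≠ 0 → ∀ m, IsLm f m → ∃ i, m ∈ Cone (μ i) (lmb i)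
  cone_lm : ∀ i, ∀ m ∈ Cone (μ i) (lmb i), ∃ f ∈ N, f ≠ 0 ∧ IsLm f m
  disj : ∀ i i' m, m ∈ Cone (μ i) (lmb i) → m ∈ Cone (μ i') (lmb i') → i = i'

variable (γφ γρ : K →+* K)

/-- `f` is reduced (in normal form) w.r.t. the pairs of `J` indexed by `P`:
no monomial of `f` lies in one of the corresponding cones. -/
def IsReduced {N : Submodule K (Fr K d)} (J : JanetBasis γφ γρ d N)
    (P : Set (Fin J.r)) (f : Fr K d) : Prop :=
  ∀ m ∈ f.support, ∀ i ∈ P, m ∉ Cone (J.μ i) (J.lmb i)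

/-- `h` is the normal form `NF(g, ·)` of `g` with respect to the pairs of `J`
indexed by `P`: the reduction process subtracts left multiples of the `b i`
(`i ∈ P`), so `g - h` lies in the `D`-span of these, and the result is reduced. -/
def IsNFOf {N : Submodule K (Fr K d)} (J : JanetBasis γφ γρ d N)
    (P : Set (Fin J.r)) (g h : Fr K d) : Prop :=
  g - h ∈ DSpan γφ γρ (J.b '' P) ∧ IsReduced γφ γρ J P h

/-- The projection `pr : 𝓕 → M`, `φ^k ρ^j κ_i ↦ F^k S^j κ̄_i`, for a `D`-module `M`
with `φ`-action `F`, `ρ`-action `S` and distinguished elements `κb i = κ̄_i`. -/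
noncomputable def pr {M : Type} [AddCommGroup M] [Module K M]
    (F S : M →+ M) (κb : Fin d → M) (f : Fr K d) : M :=
  f.sum fun m x => x • F^[m.2.1] (S^[m.2.2] (κb m.1))

/-- The relation `p_i = ρ κ_i − Σ_j D_{ij} κ_j ∈ 𝓕`, where the entry `D_{ij} ∈ K⟨φ⟩`
is recorded as the finitely supported coefficient function of its powers of `φ`. -/
noncomputable def pelt (Dmat : Fin d → Fin d → (ℕ →₀ K)) (i : Fin d) : Fr K d :=
  Finsupp.single (i, 0, 1) (1 : K)
    - ∑ j : Fin d, (Dmat i j).sum fun k x => Finsupp.single (j, k, 0) x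

/-- `n_i = inf{n | ∃ (b,μ) ∈ J, lm(b) = φ^n κ_i} ∈ ℕ∪{∞}`. -/
noncomputable def nVal {N : Submodule K (Fr K d)} (J : JanetBasis γφ γρ d N)
    (i : Fin d) : ℕ∞ :=
  sInf {c : ℕ∞ | ∃ n : ℕ, c = n ∧ ∃ ix, J.lmb ix = (i, n, 0)}

/-- `m_i = inf{n | ∃ (b,μ) ∈ J, ∃ l ≥ 0, lm(b) = φ^n ρ^l κ_i} ∈ ℕ∪{∞}`. -/
noncomputable def mVal {N : Submodule K (Fr K d)} (J : JanetBasis γφ γρ d N)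
    (i : Fin d) : ℕ∞ :=
  sInf {c : ℕ∞ | ∃ n : ℕ, c = n ∧ ∃ ix l, J.lmb ix = (i, n, l)}

/-- `W_gen = {φ^j κ_i | 1 ≤ i ≤ d, 0 ≤ j < n_i} ⊆ 𝓕`. -/
def Wgen {N : Submodule K (Fr K d)} (J : JanetBasis γφ γρ d N) : Set (Fr K d) :=
  {w | ∃ (i : Fin d) (j : ℕ), (j : ℕ∞) < nVal γφ γρ J i ∧
      w = Finsupp.single (i, j, 0) (1 : K)}

/-- `W_ind = {φ^j κ_i | 1 ≤ i ≤ d, 0 ≤ j < m_i} ⊆ 𝓕`. -/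
def Wind {N : Submodule K (Fr K d)} (J : JanetBasis γφ γρ d N) : Set (Fr K d) :=
  {w | ∃ (i : Fin d) (j : ℕ), (j : ℕ∞) < mVal γφ γρ J i ∧
      w = Finsupp.single (i, j, 0) (1 : K)}

end JanetSetup

open JanetSetup

namespace PrWgenAux

open Finsupp

variable {K : Type} [Field K] {d : ℕ} (γφ γρ : K →+* K)

/-- shift of monomial indices -/
def sh (a l : ℕ) (m : MonIx d) : MonIx d := (m.1, m.2.1 + a, m.2.2 + l)

lemma sh_def (a l : ℕ) (i : Fin d) (k j : ℕ) : sh a l (i, k, j) = (i, k + a, j + l) := rfl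

lemma MLt_def (i i' : Fin d) (k k' j j' : ℕ) :
    MLt (i, k, j) (i', k', j') ↔
      (i' < i ∨ (i = i' ∧ (k < k' ∨ (k = k' ∧ j < j')))) := Iff.rfl

lemma sh_inj (a l : ℕ) : Function.Injective (sh (d := d) a l) := by
  rintro ⟨i, k, j⟩ ⟨i', k', j'⟩ h
  rw [sh_def, sh_def, Prod.mk.injEq, Prod.mk.injEq] at h
  obtain ⟨h1, h2, h3⟩ := h
  exact Prod.ext h1 (Prod.ext (show k = k' by omega) (show j = j' by omega))

lemma sh_sh (a l a' l' : ℕ) (m : MonIx d) :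
    sh a l (sh a' l' m) = sh (a' + a) (l' + l) m := by
  obtain ⟨i, k, j⟩ := m
  show ((i, k + a' + a, j + l' + l) : MonIx d) = (i, k + (a' + a), j + (l' + l))
  rw [Nat.add_assoc, Nat.add_assoc]

lemma PhiMul_eq (f : Fr K d) :
    PhiMul γφ f = mapDomain (sh 1 0) (mapRange γφ (map_zero γφ) f) := rfl

lemma RhoMul_eq (f : Fr K d) :
    RhoMul γρ f = mapDomain (sh 0 1) (mapRange γρ (map_zero γρ) f) := by
  rfl

lemma support_PhiMul (f : Fr K d) :
    (PhiMul γφ f).support = f.support.image (sh 1 0) := by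
  classical
  rw [PhiMul_eq, Finsupp.mapDomain_support_of_injective (sh_inj 1 0),
    Finsupp.support_mapRange_of_injective _ _ γφ.injective]

lemma support_RhoMul (f : Fr K d) :
    (RhoMul γρ f).support = f.support.image (sh 0 1) := by
  classical
  rw [RhoMul_eq, Finsupp.mapDomain_support_of_injective (sh_inj 0 1),
    Finsupp.support_mapRange_of_injective _ _ γρ.injective]

lemma PhiMul_add (f g : Fr K d) :
    PhiMul γφ (f + g) = PhiMul γφ f + PhiMul γφ g := by
  rw [PhiMul_eq, PhiMul_eq, PhiMul_eq, Finsupp.mapRange_add (map_add γφ),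
    Finsupp.mapDomain_add]

lemma RhoMul_add (f g : Fr K d) :
    RhoMul γρ (f + g) = RhoMul γρ f + RhoMul γρ g := by
  rw [RhoMul_eq, RhoMul_eq, RhoMul_eq, Finsupp.mapRange_add (map_add γρ),
    Finsupp.mapDomain_add]

lemma mapRange_hom_smul (γ : K →+* K) (c : K) (f : Fr K d) :
    mapRange γ (map_zero γ) (c • f) = γ c • mapRange γ (map_zero γ) f := by
  ext m
  simp [Finsupp.mapRange_apply, map_mul]

lemma PhiMul_smul (c : K) (f : Fr K d) :
    PhiMul γφ (c • f) = γφ c • PhiMul γφ f := by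
  rw [PhiMul_eq, PhiMul_eq, mapRange_hom_smul, Finsupp.mapDomain_smul]

lemma RhoMul_smul (c : K) (f : Fr K d) :
    RhoMul γρ (c • f) = γρ c • RhoMul γρ f := by
  rw [RhoMul_eq, RhoMul_eq, mapRange_hom_smul, Finsupp.mapDomain_smul]

lemma PhiMul_zero : PhiMul γφ (0 : Fr K d) = 0 := by
  rw [PhiMul_eq]; simp

lemma RhoMul_zero : RhoMul γρ (0 : Fr K d) = 0 := by
  rw [RhoMul_eq]; simp

lemma PhiMul_single (m : MonIx d) (x : K) :
    PhiMul γφ (Finsupp.single m x) = Finsupp.single (m.1, m.2.1 + 1, m.2.2) (γφ x) := by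
  rw [PhiMul_eq, Finsupp.mapRange_single, Finsupp.mapDomain_single]; rfl

lemma RhoMul_single (m : MonIx d) (x : K) :
    RhoMul γρ (Finsupp.single m x) = Finsupp.single (m.1, m.2.1, m.2.2 + 1) (γρ x) := by
  rw [RhoMul_eq, Finsupp.mapRange_single, Finsupp.mapDomain_single]; rfl

lemma Phi_Rho_comm (hc : ∀ x : K, γφ (γρ x) = γρ (γφ x)) (f : Fr K d) :
    PhiMul γφ (RhoMul γρ f) = RhoMul γρ (PhiMul γφ f) := by
  induction f using Finsupp.induction_linear with
  | zero => rw [RhoMul_zero, PhiMul_zero, RhoMul_zero]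
  | add f g hf hg => rw [PhiMul_add, RhoMul_add, PhiMul_add, RhoMul_add, hf, hg]
  | single m x =>
    rw [RhoMul_single, PhiMul_single, PhiMul_single, RhoMul_single, hc]

lemma Phi_iter_Rho_iter_comm (hc : ∀ x : K, γφ (γρ x) = γρ (γφ x)) (a : ℕ) (f : Fr K d) :
    RhoMul γρ ((PhiMul γφ)^[a] f) = (PhiMul γφ)^[a] (RhoMul γρ f) := by
  induction a generalizing f with
  | zero => simp
  | succ n ih =>
    rw [Function.iterate_succ_apply, Function.iterate_succ_apply, ih,
      Phi_Rho_comm γφ γρ hc]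

lemma support_iter (a l : ℕ) (f : Fr K d) :
    ((PhiMul γφ)^[a] ((RhoMul γρ)^[l] f)).support = f.support.image (sh a l) := by
  classical
  induction a with
  | zero =>
    simp only [Function.iterate_zero, id_eq]
    induction l with
    | zero =>
      simp only [Function.iterate_zero, id_eq]
      ext m
      simp only [Finset.mem_image]
      constructor
      · intro hm; exact ⟨m, hm, by simp [sh]⟩
      · rintro ⟨m', hm', rfl⟩; simpa [sh] using hm'
    | succ n ih =>
      rw [Function.iterate_succ_apply', support_RhoMul, ih, Finset.image_image,
        show (sh 0 1 ∘ sh 0 n : MonIx d → MonIx d) = sh 0 (n + 1) from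
          funext fun m => sh_sh 0 1 0 n m]
  | succ n ih =>
    rw [Function.iterate_succ_apply', support_PhiMul, ih, Finset.image_image,
      show (sh 1 0 ∘ sh n l : MonIx d → MonIx d) = sh (n + 1) l from
        funext fun m => sh_sh 1 0 n l m]

/-- the monomial order embeds into a lexicographic product -/
lemma mlt_wf : WellFounded (MLt (d := d)) := by
  have hwf : WellFounded (Prod.Lex (· < · : ℕ → ℕ → Prop)
      (Prod.Lex (· < · : ℕ → ℕ → Prop) (· < · : ℕ → ℕ → Prop))) :=
    WellFounded.prod_lex (Nat.lt_wfRel.wf) (WellFounded.prod_lex Nat.lt_wfRel.wf Nat.lt_wfRel.wf)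
  have := InvImage.wf (fun m : MonIx d => ((d - 1 - m.1.val, m.2.1, m.2.2) : ℕ × ℕ × ℕ)) hwf
  apply Subrelation.wf ?_ this
  rintro ⟨i, k, j⟩ ⟨i', k', j'⟩ h
  rw [MLt_def] at h
  show Prod.Lex _ _ ((d - 1 - i.val, k, j) : ℕ × ℕ × ℕ) (d - 1 - i'.val, k', j')
  rcases h with h | ⟨h1, h2⟩
  · have hi : i.val < d := i.isLt
    have hi' : i'.val < d := i'.isLt
    have hlt : i'.val < i.val := h
    exact Prod.Lex.left _ _ (by omega)
  · have heq : i.val = i'.val := by rw [h1]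
    have h1' : d - 1 - i.val = d - 1 - i'.val := by omega
    rcases h2 with h2 | ⟨h2, h3⟩
    · exact (Prod.lex_def).mpr (Or.inr ⟨h1', Prod.Lex.left _ _ h2⟩)
    · exact (Prod.lex_def).mpr (Or.inr ⟨h1', (Prod.lex_def).mpr (Or.inr ⟨h2, h3⟩)⟩)

lemma mlt_sh (a l : ℕ) {m m' : MonIx d} (h : MLt m' m) : MLt (sh a l m') (sh a l m) := by
  obtain ⟨i, k, j⟩ := m; obtain ⟨i', k', j'⟩ := m'
  rw [sh_def, sh_def, MLt_def]
  rw [MLt_def] at h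
  rcases h with h | ⟨h1, h2⟩
  · exact Or.inl h
  · refine Or.inr ⟨h1, ?_⟩
    rcases h2 with h2 | ⟨h2, h3⟩
    · exact Or.inl (by omega)
    · exact Or.inr ⟨by omega, by omega⟩

section PrLemmas

variable {M : Type} [AddCommGroup M] [Module K M] (F S : M →+ M) (κb : Fin d → M)

/-- `v m = F^k S^j κ̄_i` for `m = (i,k,j)` -/
noncomputable def vv (m : MonIx d) : M := F^[m.2.1] (S^[m.2.2] (κb m.1))

lemma pr_eq (f : Fr K d) :
    pr F S κb f = Finsupp.linearCombination K (vv F S κb) f := by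
  rw [pr, Finsupp.linearCombination_apply]
  rfl

lemma pr_zero : pr F S κb (0 : Fr K d) = 0 := by
  rw [pr_eq]; simp

lemma pr_add (f g : Fr K d) :
    pr F S κb (f + g) = pr F S κb f + pr F S κb g := by
  rw [pr_eq, pr_eq, pr_eq, map_add]

lemma pr_single (m : MonIx d) (x : K) :
    pr F S κb (Finsupp.single m x) = x • vv F S κb m := by
  rw [pr_eq, Finsupp.linearCombination_single]

lemma FS_iter_comm (hFS : ∀ m : M, F (S m) = S (F m)) (k : ℕ) (m : M) :
    F^[k] (S m) = S (F^[k] m) := by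
  induction k generalizing m with
  | zero => simp
  | succ n ih =>
    rw [Function.iterate_succ_apply', Function.iterate_succ_apply', ih, hFS]

lemma FS_iter_iter_comm (hFS : ∀ m : M, F (S m) = S (F m)) (k l : ℕ) (m : M) :
    F^[k] (S^[l] m) = S^[l] (F^[k] m) := by
  induction l generalizing m with
  | zero => simp
  | succ n ih =>
    rw [Function.iterate_succ_apply', Function.iterate_succ_apply', ← ih,
      FS_iter_comm F S hFS]

variable (hF : ∀ (x : K) (m : M), F (x • m) = γφ x • F m)
  (hS : ∀ (x : K) (m : M), S (x • m) = γρ x • S m)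
  (hFS : ∀ m : M, F (S m) = S (F m))

include hF in
lemma pr_PhiMul (f : Fr K d) :
    pr F S κb (PhiMul γφ f) = F (pr F S κb f) := by
  induction f using Finsupp.induction_linear with
  | zero => rw [PhiMul_zero, pr_zero, map_zero]
  | add f g hf hg => rw [PhiMul_add, pr_add, pr_add, map_add, hf, hg]
  | single m x =>
    obtain ⟨i, k, j⟩ := m
    rw [PhiMul_single, pr_single, pr_single, hF]
    show γφ x • F^[k + 1] (S^[j] (κb i)) = γφ x • F (F^[k] (S^[j] (κb i)))
    rw [Function.iterate_succ_apply']

include hS hFS in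
lemma pr_RhoMul (f : Fr K d) :
    pr F S κb (RhoMul γρ f) = S (pr F S κb f) := by
  induction f using Finsupp.induction_linear with
  | zero => rw [RhoMul_zero, pr_zero, map_zero]
  | add f g hf hg => rw [RhoMul_add, pr_add, pr_add, map_add, hf, hg]
  | single m x =>
    obtain ⟨i, k, j⟩ := m
    rw [RhoMul_single, pr_single, pr_single, hS]
    show γρ x • F^[k] (S^[j + 1] (κb i)) = γρ x • S (F^[k] (S^[j] (κb i)))
    rw [Function.iterate_succ_apply', FS_iter_comm F S hFS]

include hF in
lemma pr_PhiMul_iter (k : ℕ) (f : Fr K d) :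
    pr F S κb ((PhiMul γφ)^[k] f) = F^[k] (pr F S κb f) := by
  induction k generalizing f with
  | zero => rfl
  | succ n ih =>
    rw [Function.iterate_succ_apply', Function.iterate_succ_apply',
      pr_PhiMul γφ F S κb hF, ih]

include hS hFS in
lemma pr_RhoMul_iter (k : ℕ) (f : Fr K d) :
    pr F S κb ((RhoMul γρ)^[k] f) = S^[k] (pr F S κb f) := by
  induction k generalizing f with
  | zero => rfl
  | succ n ih =>
    rw [Function.iterate_succ_apply', Function.iterate_succ_apply',
      pr_RhoMul γρ F S κb hS hFS, ih]

end PrLemmas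

section DSpanClosure

lemma DSpan_phiMul_mem {s : Set (Fr K d)} {f : Fr K d}
    (hf : f ∈ DSpan γφ γρ s) : PhiMul γφ f ∈ DSpan γφ γρ s := by
  unfold DSpan at hf ⊢
  induction hf using Submodule.span_induction with
  | mem x hx =>
    obtain ⟨k, j, g, hg, rfl⟩ := hx
    exact Submodule.subset_span
      ⟨k + 1, j, g, hg, (Function.iterate_succ_apply' _ _ _).symm⟩
  | zero => rw [PhiMul_zero]; exact Submodule.zero_mem _
  | add x y _ _ hx hy => rw [PhiMul_add]; exact Submodule.add_mem _ hx hy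
  | smul c x _ hx => rw [PhiMul_smul]; exact Submodule.smul_mem _ _ hx

lemma DSpan_rhoMul_mem (hc : ∀ x : K, γφ (γρ x) = γρ (γφ x)) {s : Set (Fr K d)}
    {f : Fr K d} (hf : f ∈ DSpan γφ γρ s) : RhoMul γρ f ∈ DSpan γφ γρ s := by
  unfold DSpan at hf ⊢
  induction hf using Submodule.span_induction with
  | mem x hx =>
    obtain ⟨k, j, g, hg, rfl⟩ := hx
    refine Submodule.subset_span ⟨k, j + 1, g, hg, ?_⟩
    rw [Phi_iter_Rho_iter_comm γφ γρ hc]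
    exact congrArg _ (Function.iterate_succ_apply' (RhoMul γρ) j g).symm
  | zero => rw [RhoMul_zero]; exact Submodule.zero_mem _
  | add x y _ _ hx hy => rw [RhoMul_add]; exact Submodule.add_mem _ hx hy
  | smul c x _ hx => rw [RhoMul_smul]; exact Submodule.smul_mem _ _ hx

lemma DSpan_phi_iter_mem (a : ℕ) {s : Set (Fr K d)} {f : Fr K d}
    (hf : f ∈ DSpan γφ γρ s) : (PhiMul γφ)^[a] f ∈ DSpan γφ γρ s := by
  induction a with
  | zero => exact hf
  | succ n ih => rw [Function.iterate_succ_apply']; exact DSpan_phiMul_mem γφ γρ ih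

lemma DSpan_rho_iter_mem (hc : ∀ x : K, γφ (γρ x) = γρ (γφ x)) (a : ℕ)
    {s : Set (Fr K d)} {f : Fr K d}
    (hf : f ∈ DSpan γφ γρ s) : (RhoMul γρ)^[a] f ∈ DSpan γφ γρ s := by
  induction a with
  | zero => exact hf
  | succ n ih =>
    rw [Function.iterate_succ_apply']; exact DSpan_rhoMul_mem γφ γρ hc ih

end DSpanClosure

end PrWgenAux

open PrWgenAux

/-!
STATEMENT 6: In the situation below, the image `pr(W_gen)` generates `M` as a
`K⟨ρ⟩`-module; i.e. the family `(S^l (pr w))_{w ∈ W_gen, l ≥ 0}` spans `M` over `K`.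
-/
theorem pr_Wgen_generates
    {K : Type} [Field K] {d : ℕ} (γφ γρ : K →+* K)
    (hcomm : ∀ x : K, γφ (γρ x) = γρ (γφ x))
    {M : Type} [AddCommGroup M] [Module K M]
    -- `M` is a left `D`-module: `F` and `S` are the commuting semilinear actions
    -- of `φ` and `ρ` on `M`
    (F S : M →+ M)
    (hF : ∀ (x : K) (m : M), F (x • m) = γφ x • F m)
    (hS : ∀ (x : K) (m : M), S (x • m) = γρ x • S m)
    (hFS : ∀ m : M, F (S m) = S (F m))
    -- `M` is free of rank `d` as `K⟨φ⟩`-module with basis `κ̄_1, …, κ̄_d`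
    (κb : Fin d → M)
    (hli : LinearIndependent K fun p : Fin d × ℕ => F^[p.2] (κb p.1))
    (hsp : Submodule.span K (Set.range fun p : Fin d × ℕ => F^[p.2] (κb p.1)) = ⊤)
    -- the `ρ`-action on the basis is given by the matrix `D ∈ Mat_{d×d}(K⟨φ⟩)`
    (Dmat : Fin d → Fin d → (ℕ →₀ K))
    (hact : ∀ i, S (κb i) = ∑ j : Fin d, (Dmat i j).sum fun k x => x • F^[k] (κb j))
    -- `J` is a Janet basis of `⟨p_1, …, p_d⟩`
    (J : JanetBasis γφ γρ d (DSpan γφ γρ (Set.range (pelt Dmat))))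
    :
    Submodule.span K
      {m : M | ∃ w ∈ Wgen γφ γρ J, ∃ l : ℕ, m = S^[l] (pr F S κb w)} = ⊤ := by
  classical
  set V : Submodule K M := Submodule.span K
    {m : M | ∃ w ∈ Wgen γφ γρ J, ∃ l : ℕ, m = S^[l] (pr F S κb w)} with hVdef
  -- pr vanishes on the relation submodule
  have pr_pelt : ∀ i : Fin d, pr F S κb (pelt Dmat i) = 0 := by
    intro i
    rw [pr_eq, pelt, map_sub, map_sum, Finsupp.linearCombination_single, one_smul]
    have h1 : vv F S κb (i, 0, 1) = S (κb i) := by simp [vv]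
    have h2 : ∀ j : Fin d, (Finsupp.linearCombination K (vv F S κb))
        ((Dmat i j).sum fun k x => Finsupp.single ((j : Fin d), k, 0) x)
        = (Dmat i j).sum fun k x => x • F^[k] (κb j) := by
      intro j
      rw [map_finsuppSum]
      apply Finsupp.sum_congr
      intro k _
      rw [Finsupp.linearCombination_single]
      rfl
    rw [h1]
    calc S (κb i) - ∑ j : Fin d, (Finsupp.linearCombination K (vv F S κb))
          ((Dmat i j).sum fun k x => Finsupp.single ((j : Fin d), k, 0) x)
        = S (κb i) - ∑ j : Fin d, (Dmat i j).sum fun k x => x • F^[k] (κb j) := by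
          rw [Finset.sum_congr rfl fun j _ => h2 j]
      _ = 0 := by rw [← hact i, sub_self]
  have hvanish : ∀ f ∈ DSpan γφ γρ (Set.range (pelt Dmat)), pr F S κb f = 0 := by
    intro f hf
    unfold DSpan at hf
    induction hf using Submodule.span_induction with
    | mem x hx =>
      obtain ⟨k, j, g, ⟨i, rfl⟩, rfl⟩ := hx
      rw [pr_PhiMul_iter γφ F S κb hF, pr_RhoMul_iter γρ F S κb hS hFS, pr_pelt]
      simp only [iterate_map_zero]
    | zero => exact pr_zero F S κb
    | add x y _ _ hx hy => rw [pr_add, hx, hy, add_zero]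
    | smul c x _ hx =>
      rw [pr_eq, map_smul, ← pr_eq, hx, smul_zero]
  -- main claim: every standard basis image lies in V
  have hmain : ∀ m0 : MonIx d, vv F S κb m0 ∈ V := by
    intro m0
    refine mlt_wf.induction (C := fun m1 => vv F S κb m1 ∈ V) m0 ?_
    rintro ⟨i, k, l⟩ IH
    by_cases hk : (k : ℕ∞) < nVal γφ γρ J i
    · -- directly a generator
      rw [hVdef]
      apply Submodule.subset_span
      refine ⟨Finsupp.single (i, k, 0) 1, ⟨i, k, hk, rfl⟩, l, ?_⟩
      rw [pr_single, one_smul]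
      show F^[k] (S^[l] (κb i)) = S^[l] (F^[k] (κb i))
      exact FS_iter_iter_comm F S hFS k l (κb i)
    · -- reduce using a Janet basis element
      push_neg at hk
      have hex : ∃ n : ℕ, n ≤ k ∧ ∃ ix, J.lmb ix = (i, n, 0) := by
        by_contra hcon
        push_neg at hcon
        have hge : ((k : ℕ∞) + 1) ≤ nVal γφ γρ J i := by
          apply le_sInf
          rintro c ⟨n, rfl, ix, hix⟩
          have hnk : ¬ n ≤ k := fun h => hcon n h ix hix
          have hlt : k + 1 ≤ n := by omega
          calc ((k : ℕ∞) + 1) = ((k + 1 : ℕ) : ℕ∞) := by push_cast; ring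
            _ ≤ (n : ℕ∞) := Nat.cast_le.mpr hlt
        have hcontra : ((k + 1 : ℕ) : ℕ∞) ≤ ((k : ℕ) : ℕ∞) := by
          push_cast
          exact le_trans hge hk
        rw [Nat.cast_le] at hcontra
        omega
      obtain ⟨n, hnk, ix, hix⟩ := hex
      have hbN : J.b ix ∈ DSpan γφ γρ (Set.range (pelt Dmat)) := by
        have hb0 : J.b ix ∈ DSpan γφ γρ (Set.range J.b) :=
          Submodule.subset_span ⟨0, 0, J.b ix, Set.mem_range_self ix, rfl⟩
        rw [J.span_eq] at hb0
        exact hb0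
      set f : Fr K d := (PhiMul γφ)^[k - n] ((RhoMul γρ)^[l] (J.b ix)) with hfdef
      have hfN : f ∈ DSpan γφ γρ (Set.range (pelt Dmat)) :=
        DSpan_phi_iter_mem γφ γρ _ (DSpan_rho_iter_mem γφ γρ hcomm _ hbN)
      have hprf : pr F S κb f = 0 := hvanish f hfN
      have hsupp : f.support = (J.b ix).support.image (sh (k - n) l) :=
        support_iter γφ γρ (k - n) l (J.b ix)
      have hshm : sh (k - n) l ((i, n, 0) : MonIx d) = (i, k, l) := by
        rw [sh_def]
        exact Prod.ext rfl (Prod.ext (show n + (k - n) = k by omega)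
          (show 0 + l = l by omega))
      have hmem : ((i, k, l) : MonIx d) ∈ f.support := by
        rw [hsupp]
        exact Finset.mem_image.mpr ⟨(i, n, 0), by rw [← hix]; exact (J.b_lm ix).1,
          hshm⟩
      have horder : ∀ m'' ∈ f.support, m'' ≠ ((i, k, l) : MonIx d) →
          MLt m'' (i, k, l) := by
        intro m'' hm'' hne
        rw [hsupp] at hm''
        obtain ⟨m', hm', rfl⟩ := Finset.mem_image.mp hm''
        have hmne : m' ≠ J.lmb ix := by
          intro h
          apply hne
          rw [h, hix, hshm]
        have hlt : MLt m' (J.lmb ix) := (J.b_lm ix).2 m' hm' hmne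
        have := mlt_sh (k - n) l hlt
        rwa [hix, hshm] at this
      -- split off the leading term
      have hne0 : f (i, k, l) ≠ 0 := Finsupp.mem_support_iff.mp hmem
      have hsum : ∑ m' ∈ f.support, f m' • vv F S κb m' = 0 := by
        rw [← hprf, pr_eq, Finsupp.linearCombination_apply]
        rfl
      have hsplit := Finset.add_sum_erase f.support
        (fun m' => f m' • vv F S κb m') hmem
      rw [hsum] at hsplit
      have hT : ∑ m' ∈ f.support.erase ((i, k, l) : MonIx d),
          f m' • vv F S κb m' ∈ V := by
        apply Submodule.sum_mem
        intro m' hm'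
        exact Submodule.smul_mem _ _
          (IH m' (horder m' (Finset.mem_of_mem_erase hm') (Finset.ne_of_mem_erase hm')))
      have h3 : f (i, k, l) • vv F S κb (i, k, l)
          = - ∑ m' ∈ f.support.erase ((i, k, l) : MonIx d), f m' • vv F S κb m' :=
        eq_neg_of_add_eq_zero_left hsplit
      have h4 : vv F S κb (i, k, l)
          = (f (i, k, l))⁻¹ • (f (i, k, l) • vv F S κb (i, k, l)) := by
        rw [smul_smul, inv_mul_cancel₀ hne0, one_smul]
      rw [h4, h3]
      exact Submodule.smul_mem _ _ (Submodule.neg_mem _ hT)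
  rw [eq_top_iff, ← hsp]
  apply Submodule.span_le.mpr
  rintro x ⟨p, rfl⟩
  exact hmain (p.1, p.2, 0)
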